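/- Let f : [a,b] → ℝ be continuous and of bounded variation, and let (P_n) be a sequence of partitions of [a,b] whose mesh sizes |P_n| tend to 0 as n → ∞. Then V_{P_n}(f) → V_a^b(f) as n → ∞. -/

import Mathlib

open Set Filter

private lemma abs_telescope_aux {g : ℕ → ℝ} {p q : ℕ} (h : p ≤ q) :
    |g q - g p| ≤ ∑ i ∈ Finset.Ico p q, |g (i + 1) - g i| := by
  have key : ∑ i ∈ Finset.Ico p q, (g (i + 1) - g i) = g q - g p := by
    rw [Finset.sum_Ico_eq_sub _ h, Finset.sum_range_sub, Finset.sum_range_sub]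
    ring
  calc |g q - g p| = |∑ i ∈ Finset.Ico p q, (g (i + 1) - g i)| := by rw [key]
    _ ≤ ∑ i ∈ Finset.Ico p q, |g (i + 1) - g i| := Finset.abs_sum_le_sum_abs _ _

private lemma sum_Ico_consec_aux (g : ℕ → ℝ) (κ : ℕ → ℕ) (hκ : Monotone κ) (m : ℕ) :
    ∑ j ∈ Finset.range m, ∑ i ∈ Finset.Ico (κ j) (κ (j + 1)), g i
      = ∑ i ∈ Finset.Ico (κ 0) (κ m), g i := by
  induction m with
  | zero => simp
  | succ m ih =>
      rw [Finset.sum_range_succ, ih,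
        Finset.sum_Ico_consecutive _ (hκ (Nat.zero_le m)) (hκ (Nat.le_succ m))]

/-- Let `f : [a,b] → ℝ` be continuous and of bounded variation, and let `(P_n)` be a
sequence of partitions of `[a,b]` (partition `P_n` given by points
`a = t n 0 < t n 1 < ⋯ < t n (N n) = b`) whose mesh sizes tend to `0`.
Then `V_{P_n}(f) → V_a^b(f)` as `n → ∞`. -/
theorem variation_tendsto_of_mesh_tendsto_zero
    (a b : ℝ) (hab : a < b) (f : ℝ → ℝ)
    (hf : ContinuousOn f (Icc a b)) (hbv : BoundedVariationOn f (Icc a b))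
    (N : ℕ → ℕ) (t : ℕ → ℕ → ℝ)
    (hN : ∀ n, 1 ≤ N n)
    (h0 : ∀ n, t n 0 = a) (h1 : ∀ n, t n (N n) = b)
    (hmono : ∀ n, ∀ i < N n, t n i < t n (i + 1))
    (hmesh : Tendsto (fun n => (Finset.range (N n)).sup' (by
        simpa using Finset.nonempty_range_iff.mpr (Nat.one_le_iff_ne_zero.mp (hN n)))
        (fun i => t n (i + 1) - t n i)) atTop (nhds 0)) :
    Tendsto (fun n => ∑ i ∈ Finset.range (N n), |f (t n (i + 1)) - f (t n i)|)
      atTop (nhds (eVariationOn f (Icc a b)).toReal) := by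
  classical
  set V : ℝ := (eVariationOn f (Icc a b)).toReal with hV
  -- monotonicity of each t n on [0, N n]
  have tmono : ∀ n, ∀ i j, i ≤ j → j ≤ N n → t n i ≤ t n j := by
    intro n i j hij hjN
    induction j with
    | zero => simp_all
    | succ j ih =>
        rcases Nat.eq_or_lt_of_le hij with rfl | hlt
        · exact le_rfl
        · exact le_trans (ih (Nat.lt_succ_iff.mp hlt) (le_trans (Nat.le_succ j) hjN))
            (le_of_lt (hmono n j (Nat.lt_of_succ_le hjN)))
  have tmem : ∀ n, ∀ i ≤ N n, t n i ∈ Icc a b := by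
    intro n i hi
    refine ⟨?_, ?_⟩
    · rw [← h0 n]; exact tmono n 0 i (Nat.zero_le _) hi
    · rw [← h1 n]; exact tmono n i (N n) hi le_rfl
  -- upper bound: S n ≤ V for all n
  have hub : ∀ n, ∑ i ∈ Finset.range (N n), |f (t n (i + 1)) - f (t n i)| ≤ V := by
    intro n
    have hmO : MonotoneOn (t n) (Iic (N n)) := fun i hi j hj hij => tmono n i j hij hj
    have h := eVariationOn.sum_le_of_monotoneOn_Iic (f := f) hmO (fun i hi => tmem n i hi)
    have heq : ∑ i ∈ Finset.range (N n), edist (f (t n (i + 1))) (f (t n i))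
        = ENNReal.ofReal (∑ i ∈ Finset.range (N n), |f (t n (i + 1)) - f (t n i)|) := by
      rw [ENNReal.ofReal_sum_of_nonneg (fun i _ => abs_nonneg _)]
      refine Finset.sum_congr rfl fun i _ => ?_
      rw [edist_dist, Real.dist_eq]
    rw [heq] at h
    exact (ENNReal.ofReal_le_iff_le_toReal hbv).mp h
  have Snonneg : ∀ n, (0:ℝ) ≤ ∑ i ∈ Finset.range (N n), |f (t n (i + 1)) - f (t n i)| :=
    fun n => Finset.sum_nonneg fun i _ => abs_nonneg _
  rw [Metric.tendsto_atTop]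
  intro ε hε
  -- choose a partition with variation sum close to V
  obtain ⟨m, u, humono, humem, husum⟩ :
      ∃ (m : ℕ) (u : ℕ → ℝ), Monotone u ∧ (∀ i, u i ∈ Icc a b) ∧
        V - ε / 2 < ∑ j ∈ Finset.range m, |f (u (j + 1)) - f (u j)| := by
    by_cases hVle : V - ε / 2 < 0
    · exact ⟨0, fun _ => a, monotone_const, fun _ => ⟨le_rfl, le_of_lt hab⟩, by
        simpa using hVle⟩
    · push_neg at hVle
      have hlt : ENNReal.ofReal (V - ε / 2) < eVariationOn f (Icc a b) := by
        have : eVariationOn f (Icc a b) = ENNReal.ofReal V := by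
          rw [hV, ENNReal.ofReal_toReal hbv]
        rw [this]
        exact ENNReal.ofReal_lt_ofReal_iff_of_nonneg hVle |>.mpr (by linarith)
      rw [eVariationOn, lt_iSup_iff] at hlt
      obtain ⟨⟨m, u, humono, humem⟩, hsum⟩ := hlt
      refine ⟨m, u, humono, humem, ?_⟩
      have heq : ∑ i ∈ Finset.range m, edist (f (u (i + 1))) (f (u i))
          = ENNReal.ofReal (∑ i ∈ Finset.range m, |f (u (i + 1)) - f (u i)|) := by
        rw [ENNReal.ofReal_sum_of_nonneg (fun i _ => abs_nonneg _)]
        refine Finset.sum_congr rfl fun i _ => ?_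
        rw [edist_dist, Real.dist_eq]
      rw [heq] at hsum
      exact (ENNReal.ofReal_lt_ofReal_iff_of_nonneg hVle).mp hsum
  -- modulus of continuity
  set η : ℝ := ε / (4 * m + 4) with hη
  have hηpos : 0 < η := by positivity
  have hfu : UniformContinuousOn f (Icc a b) :=
    isCompact_Icc.uniformContinuousOn_of_continuous hf
  rw [Metric.uniformContinuousOn_iff] at hfu
  obtain ⟨δ, hδpos, hδ⟩ := hfu η hηpos
  -- eventually mesh < δ
  have hev : ∀ᶠ n in atTop, (Finset.range (N n)).sup' (by
        simpa using Finset.nonempty_range_iff.mpr (Nat.one_le_iff_ne_zero.mp (hN n)))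
        (fun i => t n (i + 1) - t n i) < δ :=
    hmesh.eventually (Filter.Tendsto.eventually_lt_const hδpos tendsto_id) |>.mono (fun n h => h)
  rw [eventually_atTop] at hev
  obtain ⟨n₀, hn₀⟩ := hev
  refine ⟨n₀, fun n hn => ?_⟩
  have hmesh_n : ∀ i < N n, t n (i + 1) - t n i < δ := by
    intro i hi
    refine lt_of_le_of_lt ?_ (hn₀ n hn)
    exact Finset.le_sup' (fun i => t n (i + 1) - t n i) (Finset.mem_range.mpr hi)
  -- index function
  set idx : ℕ → ℕ := fun j => Nat.findGreatest (fun i => t n i ≤ u j) (N n) with hidx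
  have idx_le : ∀ j, idx j ≤ N n := fun j => Nat.findGreatest_le _
  have idx_spec : ∀ j, t n (idx j) ≤ u j := by
    intro j
    simp only [hidx]
    exact Nat.findGreatest_spec (P := fun i => t n i ≤ u j) (m := 0) (Nat.zero_le _)
      (show t n 0 ≤ u j by rw [h0 n]; exact (humem j).1)
  have idx_mono : Monotone idx := by
    intro j k hjk
    exact Nat.findGreatest_mono (P := fun i => t n i ≤ u j) (Q := fun i => t n i ≤ u k)
      (fun i hi => le_trans hi (humono hjk)) le_rfl
  have idx_close : ∀ j, dist (u j) (t n (idx j)) < δ := by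
    intro j
    rw [Real.dist_eq, abs_of_nonneg (by linarith [idx_spec j])]
    rcases lt_or_eq_of_le (idx_le j) with hlt | heq
    · have hnot : ¬ t n (idx j + 1) ≤ u j :=
        Nat.findGreatest_is_greatest (Nat.lt_succ_self _) hlt
      push_neg at hnot
      have := hmesh_n (idx j) hlt
      linarith [idx_spec j]
    · have h1' : t n (idx j) = b := by rw [heq, h1 n]
      have : u j ≤ b := (humem j).2
      rw [h1'] at *
      linarith [idx_spec j, (humem j).2]
  have fclose : ∀ j, |f (u j) - f (t n (idx j))| < η := by
    intro j
    have := hδ (u j) (humem j) (t n (idx j)) (tmem n (idx j) (idx_le j)) (idx_close j)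
    rwa [Real.dist_eq] at this
  -- main chain
  set S : ℝ := ∑ i ∈ Finset.range (N n), |f (t n (i + 1)) - f (t n i)| with hS
  have key : ∀ j, |f (u (j + 1)) - f (u j)|
      ≤ 2 * η + ∑ i ∈ Finset.Ico (idx j) (idx (j + 1)), |f (t n (i + 1)) - f (t n i)| := by
    intro j
    have h1' := fclose (j + 1)
    have h2' := fclose j
    have h3' : |f (t n (idx (j + 1))) - f (t n (idx j))|
        ≤ ∑ i ∈ Finset.Ico (idx j) (idx (j + 1)), |f (t n (i + 1)) - f (t n i)| :=
      abs_telescope_aux (g := fun i => f (t n i)) (idx_mono (Nat.le_succ j))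
    calc |f (u (j + 1)) - f (u j)|
        ≤ |f (u (j + 1)) - f (t n (idx (j + 1)))|
          + |f (t n (idx (j + 1))) - f (t n (idx j))|
          + |f (t n (idx j)) - f (u j)| := by
          have := abs_sub_le (f (u (j+1))) (f (t n (idx (j+1)))) (f (u j))
          have := abs_sub_le (f (t n (idx (j+1)))) (f (t n (idx j))) (f (u j))
          linarith
      _ ≤ 2 * η + ∑ i ∈ Finset.Ico (idx j) (idx (j + 1)), |f (t n (i + 1)) - f (t n i)| := by
          rw [abs_sub_comm (f (t n (idx j)))] at *
          linarith
  have sum_key : ∑ j ∈ Finset.range m, |f (u (j + 1)) - f (u j)|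
      ≤ 2 * m * η + S := by
    calc ∑ j ∈ Finset.range m, |f (u (j + 1)) - f (u j)|
        ≤ ∑ j ∈ Finset.range m, (2 * η
            + ∑ i ∈ Finset.Ico (idx j) (idx (j + 1)), |f (t n (i + 1)) - f (t n i)|) :=
          Finset.sum_le_sum fun j _ => key j
      _ = 2 * m * η + ∑ i ∈ Finset.Ico (idx 0) (idx m), |f (t n (i + 1)) - f (t n i)| := by
          rw [Finset.sum_add_distrib, Finset.sum_const, Finset.card_range,
            sum_Ico_consec_aux _ idx idx_mono m]
          push_cast; ring
      _ ≤ 2 * m * η + S := by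
          have hsub : Finset.Ico (idx 0) (idx m) ⊆ Finset.range (N n) := by
            intro i hi
            rw [Finset.mem_range]
            exact lt_of_lt_of_le (Finset.mem_Ico.mp hi).2 (idx_le m)
          exact add_le_add_right (Finset.sum_le_sum_of_subset_of_nonneg hsub
            (fun i _ _ => abs_nonneg _)) _
  have hm2 : 2 * (m:ℝ) * η ≤ ε / 2 := by
    have h4 : (0:ℝ) < 4 * m + 4 := by positivity
    rw [hη, mul_div_assoc', div_le_div_iff₀ h4 (by norm_num : (0:ℝ) < 2)]
    nlinarith [hε.le, Nat.cast_nonneg (α := ℝ) m]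
  have hlow : V - ε < S := by linarith
  rw [Real.dist_eq, abs_of_nonpos (by linarith [hub n])]
  linarith
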